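/- arXiv:2010.13475 — 2 statements merged into one kernel-verified Lean document; each statement's English description precedes it below -/
import Mathlib

section
/- For every integer n ≥ 1 and every r with 0 ≤ r ≤ n−1, the centralizer of a^{2r+1}b in U_{6n} is C_{U_{6n}}(a^{2r+1}b) = {a^{2s} : 0 ≤ s ≤ n−1} ∪ {a^{2s+1}b : 0 ≤ s ≤ n−1}, a subgroup of order 2n. -/
/-- The inversion automorphism of `Multiplicative (ZMod 3)` (i.e. `b ↦ b⁻¹`). -/
def negAut : MulAut (Multiplicative (ZMod 3)) := MulEquiv.inv (Multiplicative (ZMod 3))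

lemma negAut_sq : negAut * negAut = 1 := by
  ext x
  simp [negAut]

/-- The action of `ZMod (2*n)` on `Multiplicative (ZMod 3)`, where the generator acts
by inversion (negation). -/
def U6nAct (n : ℕ) : Multiplicative (ZMod (2 * n)) →* MulAut (Multiplicative (ZMod 3)) :=
  AddMonoidHom.toMultiplicativeLeft
    (ZMod.lift (2 * n) ⟨zmultiplesHom _ (Additive.ofMul negAut), by
      show ((2 * n : ℕ) : ℤ) • Additive.ofMul negAut = 0
      have : negAut ^ (2 * n) = 1 := by
        rw [pow_mul, pow_two, negAut_sq, one_pow]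
      rw [← zpow_natCast negAut, Nat.cast_mul] at this
      rw [show ((2 * n : ℕ) : ℤ) • Additive.ofMul negAut
            = Additive.ofMul (negAut ^ ((2 * n : ℕ) : ℤ)) from rfl]
      rw [Nat.cast_mul, this]; rfl⟩)

/-- The group `U_{6n} = ⟨a, b | a^(2n) = b³ = 1, a⁻¹ b a = b⁻¹⟩`, realized as the
semidirect product `(ZMod 3) ⋊ (ZMod (2n))` where the generator of `ZMod (2n)` acts by
negation. -/
abbrev U6n (n : ℕ) := SemidirectProduct (Multiplicative (ZMod 3))
    (Multiplicative (ZMod (2 * n))) (U6nAct n)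

/-- The generator `a` of `U_{6n}`, of order `2n`. -/
def Ua (n : ℕ) : U6n n := SemidirectProduct.inr (Multiplicative.ofAdd 1)

/-- The generator `b` of `U_{6n}`, of order `3`. -/
def Ub (n : ℕ) : U6n n := SemidirectProduct.inl (Multiplicative.ofAdd 1)

/-- The non-commuting graph of `U_{6n}`: vertices are the non-central elements, two
distinct vertices are adjacent iff they do not commute. -/
def ncGraph (n : ℕ) : SimpleGraph {x : U6n n // x ∉ Subgroup.center (U6n n)} where
  Adj u v := u.val * v.val ≠ v.val * u.val
  symm := ⟨fun _ _ h => fun e => h e.symm⟩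
  loopless := ⟨fun _ h => h rfl⟩


lemma negAut_apply (x : Multiplicative (ZMod 3)) : negAut x = x⁻¹ := rfl

lemma negAut_pow (m : ℕ) : negAut ^ m = if Even m then 1 else negAut := by
  induction m with
  | zero => simp
  | succ k ih =>
    rw [pow_succ, ih]
    by_cases h : Even k <;> simp [h, Nat.even_add_one, negAut_sq]

lemma U6nAct_natCast (n m : ℕ) :
    U6nAct n (Multiplicative.ofAdd ((m : ZMod (2*n)))) = negAut ^ m := by
  have : U6nAct n (Multiplicative.ofAdd ((m : ZMod (2*n)))) =
      Additive.toMul ((ZMod.lift (2 * n) ⟨zmultiplesHom _ (Additive.ofMul negAut), by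
      show ((2 * n : ℕ) : ℤ) • Additive.ofMul negAut = 0
      have : negAut ^ (2 * n) = 1 := by
        rw [pow_mul, pow_two, negAut_sq, one_pow]
      rw [← zpow_natCast negAut, Nat.cast_mul] at this
      rw [show ((2 * n : ℕ) : ℤ) • Additive.ofMul negAut
            = Additive.ofMul (negAut ^ ((2 * n : ℕ) : ℤ)) from rfl]
      rw [Nat.cast_mul, this]; rfl⟩) ((m : ZMod (2*n)))) := rfl
  rw [this, show ((m : ZMod (2*n))) = ((m : ℤ) : ZMod (2*n)) by push_cast; ring,
    ZMod.lift_coe]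
  show Additive.toMul ((m : ℤ) • Additive.ofMul negAut) = negAut ^ m
  rw [← ofMul_zpow]; simp

open SemidirectProduct Multiplicative in
lemma Ua_pow (n k : ℕ) : Ua n ^ k = inr (ofAdd ((k : ZMod (2*n)))) := by
  rw [Ua, ← map_pow]
  congr 1
  rw [← ofAdd_nsmul]
  simp

open SemidirectProduct Multiplicative in
lemma g_eq (n r : ℕ) : Ua n ^ (2*r+1) * Ub n =
    ⟨ofAdd (-1 : ZMod 3), ofAdd (((2*r+1 : ℕ) : ZMod (2*n)))⟩ := by
  rw [Ua_pow, Ub]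
  ext
  · show 1 * (U6nAct n (ofAdd (((2*r+1 : ℕ) : ZMod (2*n))))) (ofAdd 1) = ofAdd (-1 : ZMod 3)
    rw [one_mul, U6nAct_natCast, negAut_pow]
    simp [Nat.even_add_one, parity_simps, negAut_apply]
  · show ofAdd (((2*r+1 : ℕ) : ZMod (2*n))) * 1 = _
    rw [mul_one]; rfl

open SemidirectProduct Multiplicative in
lemma mem_centralizer_iff' (n : ℕ) [NeZero n] (r : ℕ) (x : U6n n) :
    x ∈ Subgroup.centralizer {Ua n ^ (2*r+1) * Ub n} ↔
      x.left = if Even ((toAdd x.right).val) then 1 else ofAdd (-1 : ZMod 3) := by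
  haveI : NeZero (2*n) := ⟨by have := NeZero.ne n; omega⟩
  obtain ⟨c, α⟩ := x
  obtain ⟨v, hvlt, rfl⟩ : ∃ v, v < 2*n ∧ α = ofAdd ((v : ZMod (2*n))) :=
    ⟨(toAdd α).val, ZMod.val_lt _, by rw [ZMod.natCast_val, ZMod.cast_id, ofAdd_toAdd]⟩
  rw [Subgroup.mem_centralizer_singleton_iff, g_eq, SemidirectProduct.ext_iff]
  have h2 : ((⟨c, ofAdd ((v : ZMod (2*n)))⟩ : U6n n)
        * ⟨ofAdd (-1 : ZMod 3), ofAdd (((2*r+1 : ℕ) : ZMod (2*n)))⟩).right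
      = (⟨ofAdd (-1 : ZMod 3), ofAdd (((2*r+1 : ℕ) : ZMod (2*n)))⟩
        * (⟨c, ofAdd ((v : ZMod (2*n)))⟩ : U6n n)).right := by
    simp [mul_right, mul_comm]
  rw [and_iff_left h2, mul_left, mul_left]
  show c * (U6nAct n (ofAdd ((v : ZMod (2*n))))) (ofAdd (-1 : ZMod 3))
      = ofAdd (-1 : ZMod 3) * (U6nAct n (ofAdd (((2*r+1 : ℕ) : ZMod (2*n))))) c ↔
      c = if Even ((toAdd (ofAdd ((v : ZMod (2*n))))).val) then 1 else ofAdd (-1 : ZMod 3)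
  rw [U6nAct_natCast, U6nAct_natCast, negAut_pow, negAut_pow,
    if_neg (by simp [parity_simps] : ¬ Even (2*r+1)), toAdd_ofAdd,
    ZMod.val_natCast_of_lt hvlt]
  by_cases hv : Even v
  · rw [if_pos hv, if_pos hv]
    simp only [MulAut.one_apply, negAut_apply]
    clear h2; revert c; decide
  · rw [if_neg hv, if_neg hv]
    simp only [negAut_apply]
    clear h2; revert c; decide

/-- For `0 ≤ r ≤ n-1`, the centralizer of `a^(2r+1)·b` in `U_{6n}` is
`{a^(2s) : 0 ≤ s ≤ n-1} ∪ {a^(2s+1)·b : 0 ≤ s ≤ n-1}`, a subgroup of order `2n`. -/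
theorem U6n_centralizer_odd_ab (n : ℕ) (hn : 1 ≤ n) (r : ℕ) (hr : r < n) :
    (Subgroup.centralizer {Ua n ^ (2 * r + 1) * Ub n} : Set (U6n n)) =
      {x | ∃ s < n, x = Ua n ^ (2 * s)} ∪ {x | ∃ s < n, x = Ua n ^ (2 * s + 1) * Ub n} ∧
    Nat.card (Subgroup.centralizer {Ua n ^ (2 * r + 1) * Ub n} : Subgroup (U6n n))
      = 2 * n := by
  haveI : NeZero n := ⟨by omega⟩
  haveI : NeZero (2*n) := ⟨by omega⟩
  constructor
  · ext x
    rw [SetLike.mem_coe, mem_centralizer_iff' n r x]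
    constructor
    · intro hx
      obtain ⟨c, α⟩ := x
      obtain ⟨v, hvlt, rfl⟩ : ∃ v, v < 2*n ∧ α = Multiplicative.ofAdd ((v : ZMod (2*n))) :=
        ⟨(Multiplicative.toAdd α).val, ZMod.val_lt _, by
          rw [ZMod.natCast_val, ZMod.cast_id, ofAdd_toAdd]⟩
      rw [show (Multiplicative.toAdd (Multiplicative.ofAdd ((v : ZMod (2*n))))).val = v by
        rw [toAdd_ofAdd, ZMod.val_natCast_of_lt hvlt]] at hx
      by_cases hv : Even v
      · obtain ⟨s, rfl⟩ : ∃ s, v = 2 * s := even_iff_exists_two_mul.mp hv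
        left
        exact ⟨s, by omega, by
          rw [Ua_pow]; ext
          · rw [if_pos hv] at hx; exact hx
          · rfl⟩
      · obtain ⟨s, rfl⟩ : ∃ s, v = 2 * s + 1 := (Nat.odd_iff.mp (Nat.not_even_iff_odd.mp hv))
          |> fun h => ⟨v / 2, by omega⟩
        right
        exact ⟨s, by omega, by
          rw [g_eq]; ext
          · rw [if_neg hv] at hx; exact hx
          · rfl⟩
    · rintro (⟨s, hs, rfl⟩ | ⟨s, hs, rfl⟩)
      · rw [Ua_pow]
        have : (Multiplicative.toAdd
            (SemidirectProduct.inr (N := Multiplicative (ZMod 3)) (φ := U6nAct n)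
              (Multiplicative.ofAdd ((2*s : ℕ) : ZMod (2*n)))).right).val = (2*s) % (2*n) := by
          show ((2*s : ℕ) : ZMod (2*n)).val = _
          exact ZMod.val_natCast _ _
        rw [this, if_pos (by
          rw [Nat.even_iff, Nat.mod_mod_of_dvd _ ⟨n, rfl⟩]; omega)]
        rfl
      · rw [g_eq]
        have : (Multiplicative.toAdd ((⟨Multiplicative.ofAdd (-1 : ZMod 3),
            Multiplicative.ofAdd (((2*s+1 : ℕ) : ZMod (2*n)))⟩ : U6n n)).right).val
            = (2*s+1) % (2*n) := by
          show ((2*s+1 : ℕ) : ZMod (2*n)).val = _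
          exact ZMod.val_natCast _ _
        rw [this, if_neg (by
          rw [Nat.even_iff, Nat.mod_mod_of_dvd _ ⟨n, rfl⟩]; omega)]
  · have hbij : Function.Bijective
        (fun x : (Subgroup.centralizer {Ua n ^ (2 * r + 1) * Ub n} : Subgroup (U6n n)) =>
          x.val.right) := by
      constructor
      · rintro ⟨x, hx⟩ ⟨y, hy⟩ h
        simp only at h
        rw [mem_centralizer_iff' n r] at hx hy
        apply Subtype.ext
        ext
        · rw [hx, hy, h]
        · exact h
      · intro α
        refine ⟨⟨⟨if Even ((Multiplicative.toAdd α).val) then 1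
            else Multiplicative.ofAdd (-1 : ZMod 3), α⟩, ?_⟩, rfl⟩
        rw [mem_centralizer_iff' n r]
    rw [Nat.card_congr (Equiv.ofBijective _ hbij)]
    rw [Nat.card_congr (Multiplicative.toAdd (α := ZMod (2*n)))]
    exact Nat.card_zmod _
end

section
/- For every integer n ≥ 1, the minimum size of a vertex cover of the non-commuting graph Γ(U_{6n}) is τ(Γ(U_{6n})) = 3n. -/
section
variable (n : ℕ)
lemma act_one : (U6nAct n (Multiplicative.ofAdd (1 : ZMod (2*n)))) = negAut := by
  have h : (Multiplicative.ofAdd (1 : ZMod (2*n))) = Multiplicative.ofAdd ((1:ℤ) : ZMod (2*n)) := by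
    norm_num
  rw [h]
  simp only [U6nAct, AddMonoidHom.toMultiplicativeLeft, Equiv.coe_fn_mk, MonoidHom.coe_mk,
    OneHom.coe_mk, toAdd_ofAdd]
  refine (congrArg Additive.toMul (ZMod.lift_coe (2*n) _ (1:ℤ))).trans ?_
  rfl
end
def pi2 (n : ℕ) : ZMod (2*n) →+* ZMod 2 := ZMod.castHom (dvd_mul_right 2 n) (ZMod 2)

instance twoMulNeZero (n : ℕ) [NeZero n] : NeZero (2*n) := ⟨by have := NeZero.ne n; omega⟩

section
variable (n : ℕ)

lemma act_nat (k : ℕ) : (U6nAct n (Multiplicative.ofAdd ((k : ℕ) : ZMod (2*n)))) = negAut ^ k := by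
  induction k with
  | zero => simpa using map_one (U6nAct n)
  | succ m ih =>
    have h : (Multiplicative.ofAdd (((m+1:ℕ)) : ZMod (2*n))) =
        (Multiplicative.ofAdd ((m:ℕ) : ZMod (2*n))) * Multiplicative.ofAdd (1 : ZMod (2*n)) := by
      rw [← ofAdd_add]
      push_cast
      rfl
    rw [h, map_mul, ih, act_one, pow_succ]

lemma negAut_pow_s10 (k : ℕ) (x : Multiplicative (ZMod 3)) :
    ((negAut ^ k) x).toAdd = if ((k : ZMod 2) = 0) then x.toAdd else -x.toAdd := by
  rcases Nat.even_or_odd k with hk | hk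
  · obtain ⟨m, rfl⟩ := hk
    have h1 : negAut ^ (m + m) = 1 := by
      rw [← two_mul, pow_mul, pow_two, negAut_sq, one_pow]
    have h2 : ((m + m : ℕ) : ZMod 2) = 0 := by
      rw [ZMod.natCast_eq_zero_iff]
      omega
    rw [h1, h2, if_pos rfl]
    rfl
  · obtain ⟨m, rfl⟩ := hk
    have h1 : negAut ^ (2*m + 1) = negAut := by
      rw [pow_succ, pow_mul, pow_two, negAut_sq, one_pow, one_mul]
    have h2 : ((2*m + 1 : ℕ) : ZMod 2) ≠ 0 := by
      rw [Ne, ZMod.natCast_eq_zero_iff]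
      omega
    rw [h1, if_neg h2]
    rfl

lemma act_eval [NeZero n] (y : ZMod (2*n)) (x : Multiplicative (ZMod 3)) :
    ((U6nAct n (Multiplicative.ofAdd y)) x).toAdd =
      if pi2 n y = 0 then x.toAdd else -x.toAdd := by
  obtain ⟨k, rfl⟩ := (ZMod.natCast_rightInverse (n := 2*n)).surjective y
  rw [act_nat, negAut_pow_s10]
  have h : pi2 n ((k:ℕ) : ZMod (2*n)) = ((k : ℕ) : ZMod 2) := map_natCast _ k
  rw [h]
end

lemma act_eval' (n : ℕ) [NeZero n] (y : Multiplicative (ZMod (2*n))) (x : Multiplicative (ZMod 3)) :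
    ((U6nAct n y) x).toAdd = if pi2 n y.toAdd = 0 then x.toAdd else -x.toAdd :=
  act_eval n y.toAdd x
section
variable (n : ℕ) [NeZero n]

/-- Equivalence of `U6n n` with the product type. -/
def eU : U6n n ≃ Multiplicative (ZMod 3) × Multiplicative (ZMod (2*n)) where
  toFun x := (x.left, x.right)
  invFun p := ⟨p.1, p.2⟩
  left_inv x := by cases x; rfl
  right_inv p := rfl

instance : Finite (U6n n) := Finite.of_equiv _ (eU n).symm

lemma U6n_comm_iff (u v : U6n n) : u * v = v * u ↔
    u.left.toAdd + (if pi2 n u.right.toAdd = 0 then v.left.toAdd else -v.left.toAdd) =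
    v.left.toAdd + (if pi2 n v.right.toAdd = 0 then u.left.toAdd else -u.left.toAdd) := by
  rw [SemidirectProduct.ext_iff]
  have hr : (u * v).right = (v * u).right := by
    simp [mul_comm]
  rw [and_iff_left hr]
  rw [SemidirectProduct.mul_left, SemidirectProduct.mul_left]
  constructor
  · intro h
    have := congrArg Multiplicative.toAdd h
    simpa [act_eval' n u.right, act_eval' n v.right] using this
  · intro h
    apply Multiplicative.toAdd.injective
    simpa [act_eval' n u.right, act_eval' n v.right] using h

lemma U6n_center_iff (z : U6n n) :
    z ∈ Subgroup.center (U6n n) ↔ z.left.toAdd = 0 ∧ pi2 n z.right.toAdd = 0 := by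
  rw [Subgroup.mem_center_iff]
  constructor
  · intro h
    have ha := (U6n_comm_iff n (Ua n) z).mp (h (Ua n))
    have hb := (U6n_comm_iff n (Ub n) z).mp (h (Ub n))
    have hUa_left : (Ua n).left.toAdd = (0 : ZMod 3) := rfl
    have hUa_right : pi2 n (Ua n).right.toAdd = 1 := by
      show pi2 n 1 = 1; exact map_one _
    have hUb_left : (Ub n).left.toAdd = (1 : ZMod 3) := rfl
    have hUb_right : pi2 n (Ub n).right.toAdd = 0 := by
      show pi2 n 0 = 0; exact map_zero _
    rw [hUa_left, hUa_right] at ha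
    rw [hUb_left, hUb_right] at hb
    rw [if_neg (by decide : (1 : ZMod 2) ≠ 0)] at ha
    rw [if_pos rfl] at hb
    constructor
    · rcases eq_or_ne (pi2 n z.right.toAdd) 0 with h0 | h0
      · rw [if_pos h0] at ha
        exact (by decide : ∀ x : ZMod 3, 0 + -x = x + 0 → x = 0) _ ha
      · rw [if_neg h0] at ha
        exact (by decide : ∀ x : ZMod 3, 0 + -x = x + -0 → x = 0) _ ha
    · by_contra h0
      rw [if_neg h0] at hb
      exact (by decide : ∀ x : ZMod 3, ¬ (1 + x = x + -1)) _ hb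
  · rintro ⟨h1, h2⟩ g
    rw [U6n_comm_iff, h1, h2, if_pos rfl]
    rcases eq_or_ne (pi2 n g.right.toAdd) 0 with h0 | h0 <;> simp [h0]
end
section
variable (n : ℕ) [NeZero n]

lemma pi2_val (y : ZMod (2*n)) : pi2 n y = ((y.val : ℕ) : ZMod 2) := by
  rw [pi2, ZMod.castHom_apply, ZMod.natCast_val]

lemma fib_card (j : ZMod 2) : Nat.card {y : ZMod (2*n) // pi2 n y = j} = n := by
  have hn : 0 < n := Nat.pos_of_ne_zero (NeZero.ne n)
  have hjv : j.val < 2 := ZMod.val_lt j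
  have jj : ((j.val : ℕ) : ZMod 2) = j := (by decide : ∀ t : ZMod 2, ((t.val : ℕ) : ZMod 2) = t) j
  have hf : ∀ a : ZMod n, pi2 n ((2 * a.val + j.val : ℕ) : ZMod (2*n)) = j := by
    intro a
    rw [map_natCast, Nat.cast_add, Nat.cast_mul, jj, Nat.cast_ofNat,
      show ((2:ZMod 2)) = 0 by decide, zero_mul, zero_add]
  let f : ZMod n → {y : ZMod (2*n) // pi2 n y = j} := fun a =>
    ⟨((2 * a.val + j.val : ℕ) : ZMod (2*n)), hf a⟩
  have hlt : ∀ a : ZMod n, 2 * a.val + j.val < 2 * n := by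
    intro a
    have := ZMod.val_lt a
    omega
  have hinj : Function.Injective f := by
    intro a b h
    have h' := congrArg (fun y => ZMod.val y.val) h
    simp only [f, ZMod.val_cast_of_lt (hlt a), ZMod.val_cast_of_lt (hlt b)] at h'
    exact ZMod.val_injective n (by omega : a.val = b.val)
  have hsurj : Function.Surjective f := by
    rintro ⟨y, hy⟩
    have hky : y.val < 2 * n := ZMod.val_lt y
    have hjy : j = ((y.val : ℕ) : ZMod 2) := by rw [← pi2_val, hy]
    have hjv' : j.val = y.val % 2 := by rw [hjy, ZMod.val_natCast]
    refine ⟨((y.val / 2 : ℕ) : ZMod n), ?_⟩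
    have hval : ((y.val / 2 : ℕ) : ZMod n).val = y.val / 2 :=
      ZMod.val_cast_of_lt (by omega)
    apply Subtype.ext
    show ((2 * ((y.val / 2 : ℕ) : ZMod n).val + j.val : ℕ) : ZMod (2*n)) = y
    rw [hval, hjv', show 2 * (y.val / 2) + y.val % 2 = y.val by omega]
    rw [ZMod.natCast_val, ZMod.cast_id]
  rw [Nat.card_congr (Equiv.ofBijective f ⟨hinj, hsurj⟩).symm, Nat.card_zmod]

lemma U6n_card : Nat.card (U6n n) = 6 * n := by
  rw [Nat.card_congr (eU n), Nat.card_prod,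
    Nat.card_congr (Multiplicative.toAdd (α := ZMod 3)),
    Nat.card_congr (Multiplicative.toAdd (α := ZMod (2*n))), Nat.card_zmod, Nat.card_zmod]
  ring

/-- The center is in bijection with the `pi2 = 0` fiber. -/
def eCenter : {y : ZMod (2*n) // pi2 n y = 0} ≃ Subgroup.center (U6n n) where
  toFun y := ⟨⟨1, Multiplicative.ofAdd y.val⟩, (U6n_center_iff n _).mpr ⟨rfl, y.prop⟩⟩
  invFun z := ⟨z.val.right.toAdd, ((U6n_center_iff n _).mp z.prop).2⟩
  left_inv y := rfl
  right_inv z := by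
    apply Subtype.ext
    apply SemidirectProduct.ext
    · have h := ((U6n_center_iff n _).mp z.prop).1
      show (1 : Multiplicative (ZMod 3)) = z.val.left
      have : z.val.left = Multiplicative.ofAdd z.val.left.toAdd := rfl
      rw [this, h]
      rfl
    · rfl

lemma center_card : Nat.card (Subgroup.center (U6n n)) = n := by
  rw [← Nat.card_congr (eCenter n), fib_card]

lemma V_card : Nat.card {x : U6n n // x ∉ Subgroup.center (U6n n)} = 5 * n := by
  have h1 := Set.ncard_add_ncard_compl (α := U6n n) {x | x ∈ Subgroup.center (U6n n)}
  rw [U6n_card] at h1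
  have h2 : ({x | x ∈ Subgroup.center (U6n n)} : Set (U6n n)).ncard = n := by
    rw [← Nat.card_coe_set_eq]
    exact center_card n
  have h3 : Nat.card {x : U6n n // x ∉ Subgroup.center (U6n n)} =
      ({x | x ∈ Subgroup.center (U6n n)}ᶜ : Set (U6n n)).ncard := by
    rw [← Nat.card_coe_set_eq]
    rfl
  omega
end
section
variable (n : ℕ) [NeZero n]

/-- The "part" function: vertices in the same part commute, in different parts don't. -/
def pF : {x : U6n n // x ∉ Subgroup.center (U6n n)} → ZMod 3 × ZMod 2 := fun v =>
  (if pi2 n v.val.right.toAdd = 0 then 0 else v.val.left.toAdd, pi2 n v.val.right.toAdd)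

lemma comm_iff_pF (u v : {x : U6n n // x ∉ Subgroup.center (U6n n)}) :
    u.val * v.val = v.val * u.val ↔ pF n u = pF n v := by
  have hu : ¬(u.val.left.toAdd = 0 ∧ pi2 n u.val.right.toAdd = 0) := by
    rw [← U6n_center_iff]; exact u.prop
  have hv : ¬(v.val.left.toAdd = 0 ∧ pi2 n v.val.right.toAdd = 0) := by
    rw [← U6n_center_iff]; exact v.prop
  have key : ∀ a b : ZMod 3, ∀ s t : ZMod 2, ¬(a = 0 ∧ s = 0) → ¬(b = 0 ∧ t = 0) →
      ((a + (if s = 0 then b else -b) = b + (if t = 0 then a else -a)) ↔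
       (((if s = 0 then (0:ZMod 3) else a), s) = ((if t = 0 then (0:ZMod 3) else b), t))) := by
    decide
  rw [U6n_comm_iff]
  exact key _ _ _ _ hu hv

lemma fiber_ncard_le (c : ZMod 3 × ZMod 2) :
    {v : {x : U6n n // x ∉ Subgroup.center (U6n n)} | pF n v = c}.ncard ≤ 2 * n := by
  rw [← Nat.card_coe_set_eq]
  rcases (by decide : ∀ x : ZMod 2, x = 0 ∨ x = 1) c.2 with h2 | h2
  · -- even fiber: inject into {x ≠ 0} × {pi2 = 0}
    have key : ∀ w : {v : {x : U6n n // x ∉ Subgroup.center (U6n n)} | pF n v = c},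
        w.val.val.left.toAdd ≠ 0 ∧ pi2 n w.val.val.right.toAdd = 0 := by
      rintro ⟨⟨x, hx⟩, hw⟩
      have hw' : pF n ⟨x, hx⟩ = c := hw
      have hs : pi2 n x.right.toAdd = 0 := by
        have := congrArg Prod.snd hw'
        simp only [pF] at this
        rw [this, h2]
      refine ⟨?_, hs⟩
      intro h0
      exact hx ((U6n_center_iff n x).mpr ⟨h0, hs⟩)
    let g : {v : {x : U6n n // x ∉ Subgroup.center (U6n n)} | pF n v = c} →
        {x : ZMod 3 // x ≠ 0} × {y : ZMod (2*n) // pi2 n y = 0} := fun w =>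
      (⟨w.val.val.left.toAdd, (key w).1⟩, ⟨w.val.val.right.toAdd, (key w).2⟩)
    have hginj : Function.Injective g := by
      rintro ⟨⟨x, hx⟩, hwx⟩ ⟨⟨y, hy⟩, hwy⟩ h
      simp only [g, Prod.mk.injEq, Subtype.mk.injEq] at h
      apply Subtype.ext; apply Subtype.ext
      exact SemidirectProduct.ext (Multiplicative.toAdd.injective h.1)
        (Multiplicative.toAdd.injective h.2)
    calc Nat.card _ ≤ Nat.card ({x : ZMod 3 // x ≠ 0} × {y : ZMod (2*n) // pi2 n y = 0}) :=
          Nat.card_le_card_of_injective g hginj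
      _ = 2 * n := by
          rw [Nat.card_prod, fib_card, Nat.card_eq_fintype_card]
          norm_num
  · -- odd fiber: inject into {pi2 = 1}
    have key : ∀ w : {v : {x : U6n n // x ∉ Subgroup.center (U6n n)} | pF n v = c},
        w.val.val.left.toAdd = c.1 ∧ pi2 n w.val.val.right.toAdd = 1 := by
      rintro ⟨⟨x, hx⟩, hw⟩
      have hw' : pF n ⟨x, hx⟩ = c := hw
      have hs : pi2 n x.right.toAdd = 1 := by
        have := congrArg Prod.snd hw'
        simp only [pF] at this
        rw [this, h2]
      have h1 := congrArg Prod.fst hw'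
      simp only [pF] at h1
      rw [if_neg (by rw [hs]; decide)] at h1
      exact ⟨h1, hs⟩
    let g : {v : {x : U6n n // x ∉ Subgroup.center (U6n n)} | pF n v = c} →
        {y : ZMod (2*n) // pi2 n y = 1} := fun w => ⟨w.val.val.right.toAdd, (key w).2⟩
    have hginj : Function.Injective g := by
      rintro ⟨⟨x, hx⟩, hwx⟩ ⟨⟨y, hy⟩, hwy⟩ h
      simp only [g, Subtype.mk.injEq] at h
      apply Subtype.ext; apply Subtype.ext
      refine SemidirectProduct.ext (Multiplicative.toAdd.injective ?_)
        (Multiplicative.toAdd.injective h)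
      have e1 := (key ⟨⟨x, hx⟩, hwx⟩).1
      have e2 := (key ⟨⟨y, hy⟩, hwy⟩).1
      simp only at e1 e2
      rw [e1, e2]
    calc Nat.card _ ≤ Nat.card {y : ZMod (2*n) // pi2 n y = 1} :=
          Nat.card_le_card_of_injective g hginj
      _ = n := fib_card n 1
      _ ≤ 2 * n := by omega

/-- The vertex cover: all vertices with odd second coordinate. -/
def SUp : Set {x : U6n n // x ∉ Subgroup.center (U6n n)} :=
  {v | pi2 n v.val.right.toAdd = 1}

/-- `SUp` in bijection with `ZMod 3 × (odd fiber)`. -/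
def eSUp : ↥(SUp n) ≃ Multiplicative (ZMod 3) × {y : ZMod (2*n) // pi2 n y = 1} where
  toFun w := (w.val.val.left, ⟨w.val.val.right.toAdd, w.prop⟩)
  invFun p := ⟨⟨⟨p.1, Multiplicative.ofAdd p.2.val⟩, by
      rw [U6n_center_iff]
      rintro ⟨-, h⟩
      rw [show pi2 n (Multiplicative.ofAdd p.2.val).toAdd = 1 from p.2.prop] at h
      exact one_ne_zero h⟩,
    p.2.prop⟩
  left_inv w := by
    apply Subtype.ext; apply Subtype.ext
    exact SemidirectProduct.ext rfl rfl
  right_inv p := rfl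

lemma SUp_ncard : (SUp n).ncard = 3 * n := by
  rw [← Nat.card_coe_set_eq, Nat.card_congr (eSUp n), Nat.card_prod,
    Nat.card_congr (Multiplicative.toAdd (α := ZMod 3)), Nat.card_zmod, fib_card]

lemma SUp_cover (u v : {x : U6n n // x ∉ Subgroup.center (U6n n)})
    (h : (ncGraph n).Adj u v) : u ∈ SUp n ∨ v ∈ SUp n := by
  by_contra hc
  push_neg at hc
  have h0 : ∀ x : ZMod 2, x ≠ 1 → x = 0 := by decide
  have hu := h0 _ hc.1
  have hv := h0 _ hc.2
  apply h
  rw [U6n_comm_iff, if_pos hu, if_pos hv, add_comm]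
end
/-- The minimum size of a vertex cover of the non-commuting graph of `U_{6n}` is `3n`. -/
theorem U6n_vertex_cover (n : ℕ) (hn : 1 ≤ n) :
    IsLeast {k | ∃ S : Set {x : U6n n // x ∉ Subgroup.center (U6n n)},
      (∀ u v, (ncGraph n).Adj u v → u ∈ S ∨ v ∈ S) ∧ S.ncard = k} (3 * n) := by
  haveI : NeZero n := ⟨by omega⟩
  constructor
  · exact ⟨SUp n, SUp_cover n, SUp_ncard n⟩
  · rintro k ⟨S, hcov, rfl⟩
    have hsum : S.ncard + Sᶜ.ncard = 5 * n := by
      rw [Set.ncard_add_ncard_compl, V_card]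
    have hTcomm : ∀ u ∈ Sᶜ, ∀ v ∈ Sᶜ, u.val * v.val = v.val * u.val := by
      intro u hu v hv
      by_contra hne
      rcases hcov u v hne with h | h
      exacts [hu h, hv h]
    rcases Set.eq_empty_or_nonempty (Sᶜ) with hT | ⟨t, ht⟩
    · have : Sᶜ.ncard = 0 := by rw [hT]; simp
      omega
    · have hsub : Sᶜ ⊆ {v | pF n v = pF n t} := by
        intro v hv
        exact (comm_iff_pF n v t).mp (hTcomm v hv t ht)
      have hle : Sᶜ.ncard ≤ 2 * n :=
        le_trans (Set.ncard_le_ncard hsub (Set.toFinite _)) (fiber_ncard_le n (pF n t))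
      omega
end
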